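/- For a ring R the following are equivalent: (1) every right R-module can be embedded in a product of iso-simple right R-modules; (2) every nonzero right R-module has zero Jacobson radical (the intersection of all maximal submodules is zero); (3) R is a right V-ring. -/

import Mathlib

universe u

open MulOpposite

/-- A nonzero module is iso-simple if it is isomorphic to each of its nonzero submodules. -/
def IsIsoSimpleModule (A : Type u) [Ring A] (M : Type u) [AddCommGroup M] [Module A M] : Prop :=
  Nontrivial M ∧ ∀ N : Submodule A M, N ≠ ⊥ → Nonempty (M ≃ₗ[A] N)

/-- `R` is a right V-ring: every simple right `R`-module is injective.
Right `R`-modules are modules over `Rᵐᵒᵖ`. -/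
def IsRightVRing (R : Type u) [Ring R] : Prop :=
  ∀ (S : Type u) [AddCommGroup S] [Module Rᵐᵒᵖ S],
    IsSimpleModule Rᵐᵒᵖ S → Module.Injective Rᵐᵒᵖ S



section Aux

variable {A : Type u} [Ring A] {M : Type u} [AddCommGroup M] [Module A M]

theorem exists_maximal_avoiding {x : M} (hx : x ≠ 0) :
    ∃ N : Submodule A M, x ∉ N ∧ ∀ N' : Submodule A M, N < N' → x ∈ N' := by
  have key : ∀ c ⊆ {N : Submodule A M | x ∉ N}, IsChain (· ≤ ·) c → ∀ y ∈ c,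
      ∃ ub ∈ {N : Submodule A M | x ∉ N}, ∀ z ∈ c, z ≤ ub := by
    intro c hcs hc y hy
    refine ⟨sSup c, ?_, fun z hz => le_sSup hz⟩
    intro hmem
    obtain ⟨N, hNc, hxN⟩ := (Submodule.mem_sSup_of_directed ⟨y, hy⟩ hc.directedOn).1 hmem
    exact hcs hNc hxN
  obtain ⟨N, -, hN⟩ := zorn_le_nonempty₀ {N : Submodule A M | x ∉ N} key ⊥ (by simpa using hx)
  refine ⟨N, hN.prop, fun N' hlt => ?_⟩
  by_contra hxN'
  exact hlt.ne (le_antisymm hlt.le (hN.le_of_ge hxN' hlt.le))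

theorem mk_mem_of_ne_bot {x : M} {N : Submodule A M}
    (hmax : ∀ N' : Submodule A M, N < N' → x ∈ N')
    {Q : Submodule A (M ⧸ N)} (hQ : Q ≠ ⊥) :
    Submodule.Quotient.mk x ∈ Q := by
  have hle : N ≤ Q.comap N.mkQ := by
    intro n hn
    have : (Submodule.Quotient.mk n : M ⧸ N) = 0 := (Submodule.Quotient.mk_eq_zero N).2 hn
    simp [Submodule.mem_comap, Submodule.mkQ_apply, this]
  have hne : N ≠ Q.comap N.mkQ := by
    intro h
    apply hQ
    have h1 : Submodule.map N.mkQ (Q.comap N.mkQ) = Q := by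
      rw [Submodule.map_comap_eq, Submodule.range_mkQ, top_inf_eq]
    rw [← h1, ← h]
    rw [eq_bot_iff]
    rintro _ ⟨n, hn, rfl⟩
    simpa [Submodule.mkQ_apply] using (Submodule.Quotient.mk_eq_zero N).2 hn
  exact hmax _ (lt_of_le_of_ne hle hne) 

theorem heart_isSimple {x : M} {N : Submodule A M} (hxN : x ∉ N)
    (hmax : ∀ N' : Submodule A M, N < N' → x ∈ N') :
    IsSimpleModule A (Submodule.span A {(Submodule.Quotient.mk x : M ⧸ N)}) := by
  rw [isSimpleModule_iff_isAtom]
  constructor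
  · rw [ne_eq, Submodule.span_singleton_eq_bot, Submodule.Quotient.mk_eq_zero]
    exact hxN
  · intro b hb
    by_contra hbne
    have hmem := mk_mem_of_ne_bot hmax hbne
    exact hb.ne (le_antisymm hb.le (Submodule.span_le.2 (by simpa using hmem)))

theorem isCoatom_of_span_top {x : M} {N : Submodule A M} (hxN : x ∉ N)
    (hmax : ∀ N' : Submodule A M, N < N' → x ∈ N')
    (htop : Submodule.span A {(Submodule.Quotient.mk x : M ⧸ N)} = ⊤) :
    IsCoatom N := by
  constructor
  · intro h; exact hxN (h ▸ Submodule.mem_top)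
  · intro N' hlt
    have hx' : x ∈ N' := hmax N' hlt
    have hmap : Submodule.map N.mkQ N' = ⊤ := by
      rw [← top_le_iff, ← htop, Submodule.span_le]
      intro z hz
      rw [Set.mem_singleton_iff] at hz
      subst hz
      exact ⟨x, hx', rfl⟩
    have := Submodule.comap_map_mkQ N N'
    rw [hmap, Submodule.comap_top, sup_eq_right.2 hlt.le] at this
    exact this.symm

end Aux
section Iso
variable {A : Type u} [Ring A] {M M' : Type u} [AddCommGroup M] [Module A M]
  [AddCommGroup M'] [Module A M']

theorem IsIsoSimpleModule.congr (e : M ≃ₗ[A] M') (h : IsIsoSimpleModule A M') :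
    IsIsoSimpleModule A M := by
  obtain ⟨hnt, hiso⟩ := h
  refine ⟨e.toEquiv.nontrivial, fun N hN => ?_⟩
  have hN' : N.map (e : M →ₗ[A] M') ≠ ⊥ := by
    intro hb
    apply hN
    refine (Submodule.orderIsoMapComap e).injective ?_
    simpa [Submodule.orderIsoMapComap] using hb
  obtain ⟨g⟩ := hiso (N.map (e : M →ₗ[A] M')) hN'
  exact ⟨((e.trans g).trans (e.submoduleMap N).symm : M ≃ₗ[A] N)⟩

theorem isIsoSimpleModule_of_isSimpleModule [h : IsSimpleModule A M] :
    IsIsoSimpleModule A M := by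
  refine ⟨IsSimpleModule.nontrivial A M, fun N hN => ?_⟩
  have : N = ⊤ := (eq_bot_or_eq_top N).resolve_left hN
  subst this
  exact ⟨Submodule.topEquiv.symm⟩

end Iso

theorem baer_of_rad (A : Type u) [Ring A]
    (h2 : ∀ (M : Type u) [AddCommGroup M] [Module A M], Nontrivial M →
        sInf {N : Submodule A M | IsCoatom N} = ⊥)
    (S : Type u) [AddCommGroup S] [Module A S] (hS : IsSimpleModule A S) :
    Module.Baer A S := by
  intro I g
  by_cases hg : ∀ (x : A) (hx : x ∈ I), g ⟨x, hx⟩ = 0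
  · exact ⟨0, fun x hx => by simp [hg x hx]⟩
  push_neg at hg
  obtain ⟨i₀, hi₀I, hgi₀⟩ := hg
  set K : Ideal A := (LinearMap.ker g).map I.subtype with hK
  have hi₀K : i₀ ∉ K := by
    rintro ⟨j, hj, hji⟩
    apply hgi₀
    have hj' : (⟨i₀, hi₀I⟩ : I) = j := Subtype.ext hji.symm
    rw [hj']
    exact hj
  have hKtop : K ≠ ⊤ := fun h => hi₀K (h ▸ Submodule.mem_top)
  have hnt : Nontrivial (A ⧸ K) := Submodule.Quotient.nontrivial_iff.2 hKtop
  have h0 : (Submodule.Quotient.mk i₀ : A ⧸ K) ≠ 0 := by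
    rw [ne_eq, Submodule.Quotient.mk_eq_zero]; exact hi₀K
  have hsInf := h2 (A ⧸ K) hnt
  have hex : ∃ Q ∈ {N : Submodule A (A ⧸ K) | IsCoatom N}, Submodule.Quotient.mk i₀ ∉ Q := by
    by_contra h
    push_neg at h
    exact h0 (by rw [← Submodule.mem_bot A, ← hsInf]; exact Submodule.mem_sInf.2 h)
  obtain ⟨Q, hQ, hi₀Q⟩ := hex
  set m : Ideal A := Q.comap K.mkQ with hm
  have hKm : K ≤ m := by
    intro k hk
    have : (Submodule.Quotient.mk k : A ⧸ K) = 0 := (Submodule.Quotient.mk_eq_zero K).2 hk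
    simp [hm, Submodule.mem_comap, Submodule.mkQ_apply, this]
  have hmapQ : Submodule.map K.mkQ m = Q := by
    rw [hm, Submodule.map_comap_eq, Submodule.range_mkQ, top_inf_eq]
  have hi₀m : i₀ ∉ m := hi₀Q
  have hmco : IsCoatom m := by
    constructor
    · intro h
      apply hQ.1
      rw [← hmapQ, h, Submodule.map_top, Submodule.range_mkQ]
    · intro m' hmm'
      have hKm' : K ≤ m' := hKm.trans hmm'.le
      have hcm : Submodule.comap K.mkQ (Submodule.map K.mkQ m') = m' := by
        rw [Submodule.comap_map_mkQ, sup_eq_right.2 hKm']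
      have hlt : Q < Submodule.map K.mkQ m' := by
        rw [← hmapQ]
        constructor
        · exact Submodule.map_mono hmm'.le
        · intro hle
          have := Submodule.comap_mono (f := K.mkQ) hle
          rw [hcm, Submodule.comap_map_mkQ, sup_eq_right.2 hKm] at this
          exact hmm'.not_ge this
      have := hQ.2 _ hlt
      rw [this, Submodule.comap_top] at hcm
      exact hcm.symm
  have hsup : I ⊔ m = ⊤ := by
    refine hmco.2 _ (lt_of_le_of_ne le_sup_right fun h => hi₀m ?_)
    rw [sup_comm] at h
    exact h ▸ Submodule.mem_sup_right hi₀I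
  have key : ∀ (a : A) (ha : a ∈ I), a ∈ m → g ⟨a, ha⟩ = 0 := by
    intro a ha ham
    by_contra hga
    have hsp : Submodule.span A {g ⟨a, ha⟩} = ⊤ :=
      (eq_bot_or_eq_top _).resolve_left (by
        rw [Submodule.span_singleton_eq_bot]; exact hga)
    have hmem : g ⟨i₀, hi₀I⟩ ∈ Submodule.span A {g ⟨a, ha⟩} := hsp ▸ Submodule.mem_top
    obtain ⟨r, hr⟩ := Submodule.mem_span_singleton.1 hmem
    have hKmem : i₀ - r • a ∈ K := by
      refine ⟨⟨i₀, hi₀I⟩ - r • ⟨a, ha⟩, ?_, rfl⟩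
      simp only [SetLike.mem_coe, LinearMap.mem_ker, map_sub, map_smul, hr, sub_self]
    have : i₀ ∈ m := by
      have h1 : i₀ - r • a ∈ m := hKm hKmem
      have h2 : r • a ∈ m := m.smul_mem r ham
      simpa using add_mem h1 h2
    exact hi₀m this
  set e : I →ₗ[A] A ⧸ m := m.mkQ.comp I.subtype with he
  have hesurj : Function.Surjective e := by
    intro z
    obtain ⟨a, rfl⟩ := Submodule.mkQ_surjective m z
    have : a ∈ I ⊔ m := hsup ▸ Submodule.mem_top
    obtain ⟨i, hiI, y, hym, rfl⟩ := Submodule.mem_sup.1 this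
    refine ⟨⟨i, hiI⟩, ?_⟩
    have : (Submodule.Quotient.mk y : A ⧸ m) = 0 := (Submodule.Quotient.mk_eq_zero m).2 hym
    simp [he, Submodule.mkQ_apply, Submodule.Quotient.mk_add, this]
  have hker : LinearMap.ker e ≤ LinearMap.ker g := by
    rintro ⟨j, hjI⟩ hj
    rw [LinearMap.mem_ker] at hj ⊢
    have hjm : j ∈ m := by
      simpa [he, Submodule.mkQ_apply, Submodule.Quotient.mk_eq_zero] using hj
    exact key j hjI hjm
  refine ⟨(Submodule.liftQ _ g hker).comp
    (((e.quotKerEquivOfSurjective hesurj).symm : (A ⧸ m) →ₗ[A] _).comp m.mkQ), fun x hx => ?_⟩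
  have h1 : m.mkQ x = e.quotKerEquivOfSurjective hesurj
      (Submodule.Quotient.mk (⟨x, hx⟩ : I)) := rfl
  simp only [LinearMap.comp_apply, h1, LinearEquiv.coe_coe, LinearEquiv.symm_apply_apply,
    Submodule.liftQ_apply]

/-- For a ring `R` the following are equivalent:
(1) every right `R`-module embeds in a product of iso-simple right `R`-modules;
(2) every nonzero right `R`-module has zero Jacobson radical (the intersection of its
    maximal submodules is zero);
(3) `R` is a right V-ring. -/
theorem rightV_tfae (R : Type u) [Ring R] :
    List.TFAE
      [∀ (M : Type u) [AddCommGroup M] [Module Rᵐᵒᵖ M],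
         ∃ (ι : Type u) (P : ι → ModuleCat.{u} Rᵐᵒᵖ),
           (∀ i, IsIsoSimpleModule Rᵐᵒᵖ (P i)) ∧
           ∃ f : M →ₗ[Rᵐᵒᵖ] ((i : ι) → P i), Function.Injective f,
       ∀ (M : Type u) [AddCommGroup M] [Module Rᵐᵒᵖ M], Nontrivial M →
         sInf {N : Submodule Rᵐᵒᵖ M | IsCoatom N} = ⊥,
       IsRightVRing R] := by
  tfae_have 1 → 2 := by
    intro h1 M _ _ hnt
    rw [eq_bot_iff]
    intro x hx
    simp only [Submodule.mem_bot]
    by_contra hx0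
    obtain ⟨N, hxN, hmax⟩ := exists_maximal_avoiding (A := Rᵐᵒᵖ) hx0
    obtain ⟨ι, P, hP, f, hf⟩ := h1 (M ⧸ N)
    set xb : M ⧸ N := Submodule.Quotient.mk x with hxbdef
    have hxb : xb ≠ 0 := by
      rw [hxbdef, ne_eq, Submodule.Quotient.mk_eq_zero]; exact hxN
    have hfx : f xb ≠ 0 := fun h => hxb (hf (by simpa using h))
    obtain ⟨i, hi⟩ : ∃ i, f xb i ≠ 0 := by
      by_contra h
      push_neg at h
      exact hfx (funext h)
    set φ : (M ⧸ N) →ₗ[Rᵐᵒᵖ] P i := (LinearMap.proj i).comp f with hφdef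
    have hφx : φ xb ≠ 0 := hi
    have hφinj : Function.Injective φ := by
      rw [← LinearMap.ker_eq_bot]
      by_contra hk
      exact hφx (LinearMap.mem_ker.1 (mk_mem_of_ne_bot hmax hk))
    have hrange : LinearMap.range φ ≠ ⊥ := by
      intro h
      apply hφx
      have hm := LinearMap.mem_range_self φ xb
      rw [h] at hm
      simpa using hm
    obtain ⟨g⟩ := (hP i).2 _ hrange
    have e1 : (M ⧸ N) ≃ₗ[Rᵐᵒᵖ] P i := (LinearEquiv.ofInjective φ hφinj).trans g.symm
    have hiso : IsIsoSimpleModule Rᵐᵒᵖ (M ⧸ N) := IsIsoSimpleModule.congr e1 (hP i)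
    set H := Submodule.span Rᵐᵒᵖ {xb} with hH
    have hHbot : H ≠ ⊥ := by
      rw [hH, ne_eq, Submodule.span_singleton_eq_bot]; exact hxb
    obtain ⟨eH⟩ := hiso.2 H hHbot
    haveI hs : IsSimpleModule Rᵐᵒᵖ H := heart_isSimple hxN hmax
    haveI hsimp : IsSimpleModule Rᵐᵒᵖ (M ⧸ N) := IsSimpleModule.congr eH
    have htop : H = ⊤ := (eq_bot_or_eq_top H).resolve_left hHbot
    exact absurd (Submodule.mem_sInf.1 hx N (isCoatom_of_span_top hxN hmax htop)) hxN
  tfae_have 2 → 1 := by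
    intro h2 M _ _
    rcases subsingleton_or_nontrivial M with hM | hM
    · exact ⟨PEmpty.{u+1}, PEmpty.elim, fun i => i.elim, 0, fun a b _ => Subsingleton.elim a b⟩
    refine ⟨{N : Submodule Rᵐᵒᵖ M // IsCoatom N},
      fun N => ModuleCat.of Rᵐᵒᵖ (M ⧸ N.1), fun N => ?_,
      LinearMap.pi (fun N => N.1.mkQ), ?_⟩
    · haveI : IsSimpleModule Rᵐᵒᵖ (M ⧸ N.1) := isSimpleModule_iff_isCoatom.2 N.2
      exact isIsoSimpleModule_of_isSimpleModule
    · rw [← LinearMap.ker_eq_bot, eq_bot_iff]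
      intro y hy
      rw [LinearMap.mem_ker] at hy
      have : y ∈ sInf {N : Submodule Rᵐᵒᵖ M | IsCoatom N} := by
        refine Submodule.mem_sInf.2 fun N hN => ?_
        have h5 : N.mkQ y = 0 := congrFun hy ⟨N, hN⟩
        exact (Submodule.Quotient.mk_eq_zero N).1 h5
      rwa [h2 M hM] at this
  tfae_have 2 → 3 := by
    intro h2 S _ _ hS
    exact (baer_of_rad Rᵐᵒᵖ h2 S hS).injective
  tfae_have 3 → 2 := by
    intro h3 M _ _ hnt
    rw [eq_bot_iff]
    intro x hx
    simp only [Submodule.mem_bot]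
    by_contra hx0
    obtain ⟨N, hxN, hmax⟩ := exists_maximal_avoiding (A := Rᵐᵒᵖ) hx0
    set xb : M ⧸ N := Submodule.Quotient.mk x with hxbdef
    have hxb : xb ≠ 0 := by
      rw [hxbdef, ne_eq, Submodule.Quotient.mk_eq_zero]; exact hxN
    set H := Submodule.span Rᵐᵒᵖ {xb} with hH
    haveI hs : IsSimpleModule Rᵐᵒᵖ H := heart_isSimple hxN hmax
    have hinj : Module.Injective Rᵐᵒᵖ H := h3 H hs
    obtain ⟨π, hπ⟩ := hinj.out H.subtype (Submodule.injective_subtype H) LinearMap.id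
    have hxH : xb ∈ H := Submodule.mem_span_singleton_self xb
    have hkerπ : LinearMap.ker π = ⊥ := by
      by_contra hk
      have hxmem := mk_mem_of_ne_bot hmax hk
      have h0 : π xb = 0 := LinearMap.mem_ker.1 hxmem
      have h1 := hπ ⟨xb, hxH⟩
      rw [Submodule.subtype_apply] at h1
      rw [h0] at h1
      exact hxb (by simpa using congrArg Subtype.val h1.symm)
    have htop : H = ⊤ := by
      rw [eq_top_iff]
      intro m _
      have h0 : π (m - H.subtype (π m)) = 0 := by
        rw [map_sub, hπ (π m)]
        simp
      have h1 : m - H.subtype (π m) = 0 := by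
        have := LinearMap.mem_ker.2 h0
        rwa [hkerπ, Submodule.mem_bot] at this
      have h2 := sub_eq_zero.1 h1
      rw [h2]
      exact (π m).2
    exact absurd (Submodule.mem_sInf.1 hx N (isCoatom_of_span_top hxN hmax htop)) hxN
  tfae_finish
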